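/- arXiv:2508.20512 — 4 statements merged into one kernel-verified Lean document; each statement's English description precedes it below -/
import Mathlib

section
/- Let S₁, S₂, S₃ be Hermitian operators with [S_α, S_β] = i ∑_γ ε_{αβγ} S_γ, pairwise Hilbert–Schmidt orthogonal with common normalized Frobenius norm c = ‖S_α‖. Set H_c^f = C_H S₁ and ρ_c^i = C_ρ (S₁ cos φ + S₂ sin φ) with C_H, C_ρ > 0 and φ ∈ [0,π]. Then for H := S₃/c and any T with ωT/c ∈ (0, π−φ], the self-consistency identity −i[H_c^f, e^{−iωT H} ρ_c^i e^{iωT H}] = C·H holds with scalar C = c C_H C_ρ sin(ωT/c + φ) ≥ 0. -/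
open Matrix

/-- Normalized Frobenius norm. -/
noncomputable def nfrob {D : ℕ} (M : Matrix (Fin D) (Fin D) ℂ) : ℝ :=
  Real.sqrt (((Mᴴ * M).trace).re / D)

/-- `evol M t = e^{-itM}`. -/
noncomputable def evol {D : ℕ} (M : Matrix (Fin D) (Fin D) ℂ) (t : ℝ) :
    Matrix (Fin D) (Fin D) ℂ :=
  NormedSpace.exp ((((-t : ℝ) : ℂ) * Complex.I) • M)

theorem exp_semiconj' {A' : Type*} [NormedRing A'] [NormedAlgebra ℂ A'] [CompleteSpace A']
    (A B : A') (l : ℂ) (h : A * B = B * A + l • B) :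
    NormedSpace.exp A * B = Complex.exp l • (B * NormedSpace.exp A) := by
  letI : NormedAlgebra ℚ A' := NormedAlgebra.restrictScalars ℚ ℂ A'
  have h' : A * B = B * (A + l • (1:A')) := by
    rw [mul_add, mul_smul_comm, mul_one, h]
  have hpow : ∀ n : ℕ, A ^ n * B = B * (A + l • (1:A')) ^ n := by
    intro n; induction n with
    | zero => simp
    | succ n ih => rw [pow_succ', mul_assoc, ih, ← mul_assoc, h', mul_assoc, ← pow_succ']
  have hsum := NormedSpace.expSeries_summable' (𝕂 := ℂ) A
  have hsum2 := NormedSpace.expSeries_summable' (𝕂 := ℂ) (A + l • (1:A'))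
  have h1 : NormedSpace.exp A * B = B * NormedSpace.exp (A + l • (1:A')) := by
    simp only [NormedSpace.exp_eq_tsum ℂ]
    rw [← hsum.tsum_mul_right B, ← hsum2.tsum_mul_left B]
    congr 1; funext n
    rw [smul_mul_assoc, hpow n, mul_smul_comm]
  have h2 : NormedSpace.exp (l • (1:A')) = Complex.exp l • (1:A') := by
    rw [← Algebra.algebraMap_eq_smul_one, ← NormedSpace.algebraMap_exp_comm,
      Algebra.algebraMap_eq_smul_one, ← Complex.exp_eq_exp_ℂ]
  rw [h1, NormedSpace.exp_add_of_commute ((Commute.one_right A).smul_right l), h2,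
    mul_smul_comm, mul_one, mul_smul_comm]

/-- Explicit solution of the self-consistent equation for su(2) control:
with `H = S₃/c`, the identity `-i[H_c^f, e^{-iωTH} ρ_c^i e^{iωTH}] = C·H` holds,
with `C = c·C_H·C_ρ·sin(ωT/c + φ) ≥ 0`. -/
theorem stmt_9 (D : ℕ) (S : Fin 3 → Matrix (Fin D) (Fin D) ℂ)
    (hH : ∀ α, (S α).IsHermitian)
    (hc01 : S 0 * S 1 - S 1 * S 0 = Complex.I • S 2)
    (hc12 : S 1 * S 2 - S 2 * S 1 = Complex.I • S 0)
    (hc20 : S 2 * S 0 - S 0 * S 2 = Complex.I • S 1)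
    (horth : ∀ α β, α ≠ β → (S α * S β).trace = 0)
    (c : ℝ) (hc : 0 < c) (hnorm : ∀ α, nfrob (S α) = c)
    (CH Cρ ω T φ : ℝ) (hCH : 0 < CH) (hCρ : 0 < Cρ) (hω : 0 < ω)
    (hφ : φ ∈ Set.Icc 0 Real.pi)
    (hT : ω * T / c ∈ Set.Ioc 0 (Real.pi - φ))
    (Hf ρ Hop : Matrix (Fin D) (Fin D) ℂ)
    (hHf : Hf = (CH : ℂ) • S 0)
    (hρ : ρ = (Cρ : ℂ) • (((Real.cos φ : ℝ) : ℂ) • S 0 + ((Real.sin φ : ℝ) : ℂ) • S 1))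
    (hHop : Hop = ((c⁻¹ : ℝ) : ℂ) • S 2) :
    (-Complex.I) • (Hf * (evol Hop (ω * T) * ρ * evol Hop (-(ω * T))) -
        (evol Hop (ω * T) * ρ * evol Hop (-(ω * T))) * Hf)
      = ((c * CH * Cρ * Real.sin (ω * T / c + φ) : ℝ) : ℂ) • Hop ∧
      0 ≤ c * CH * Cρ * Real.sin (ω * T / c + φ) := by
  letI : SeminormedRing (Matrix (Fin D) (Fin D) ℂ) := Matrix.linftyOpSemiNormedRing
  letI : NormedRing (Matrix (Fin D) (Fin D) ℂ) := Matrix.linftyOpNormedRing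
  letI : NormedAlgebra ℂ (Matrix (Fin D) (Fin D) ℂ) := Matrix.linftyOpNormedAlgebra
  letI : NormedAlgebra ℚ (Matrix (Fin D) (Fin D) ℂ) := NormedAlgebra.restrictScalars ℚ ℂ _
  set θ : ℝ := ω * T / c with hθ
  -- sign of sine
  have hI2 : Complex.I ^ 2 = -1 := Complex.I_sq
  have hI3 : Complex.I ^ 3 = -Complex.I := by rw [pow_succ, hI2]; ring
  have hsin : 0 ≤ Real.sin (θ + φ) := by
    apply Real.sin_nonneg_of_nonneg_of_le_pi
    · have := hT.1; have := hφ.1; linarith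
    · have := hT.2; linarith
  refine ⟨?_, by positivity⟩
  -- commutation relations
  have e01 : S 0 * S 1 = S 1 * S 0 + Complex.I • S 2 := by rw [← hc01]; abel
  have e20 : S 2 * S 0 = S 0 * S 2 + Complex.I • S 1 := by rw [← hc20]; abel
  have e21 : S 2 * S 1 = S 1 * S 2 - Complex.I • S 0 := by rw [← hc12]; abel
  set a : ℂ := -(θ : ℂ) * Complex.I with ha
  set A : Matrix (Fin D) (Fin D) ℂ := a • S 2 with hA
  set Sp : Matrix (Fin D) (Fin D) ℂ := S 0 + Complex.I • S 1 with hSp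
  set Sm : Matrix (Fin D) (Fin D) ℂ := S 0 - Complex.I • S 1 with hSm
  have hcθ : (c : ℂ) ≠ 0 := by exact_mod_cast hc.ne'
  have hU : evol Hop (ω * T) = NormedSpace.exp A := by
    rw [evol, hHop, smul_smul, hA]; congr 1
    rw [ha, hθ]; push_cast; field_simp; ((try ring); (try ring_nf); (try simp only [hI2, hI3]); (try ring))
  have hV : evol Hop (-(ω * T)) = NormedSpace.exp (-A) := by
    rw [evol, hHop, smul_smul, hA, ← neg_smul]; congr 1
    rw [ha, hθ]; push_cast; field_simp; ((try ring); (try ring_nf); (try simp only [hI2, hI3]); (try ring))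
  set U := NormedSpace.exp A with hUdef
  set V := NormedSpace.exp (-A) with hVdef
  have hUV : U * V = 1 := by
    have hE := NormedSpace.exp_add_of_commute ((Commute.refl A).neg_right)
    rw [add_neg_cancel, NormedSpace.exp_zero] at hE
    rw [hUdef, hVdef]; exact hE.symm
  have hp : A * Sp = Sp * A + a • Sp := by
    rw [hA, hSp]
    simp only [smul_mul_assoc, mul_add, add_mul, mul_smul_comm, smul_add, smul_smul,
      e20, e21, mul_sub, smul_sub]
    match_scalars <;> ((try ring); (try ring_nf); (try simp only [hI2, hI3]); (try ring))
  have hm : A * Sm = Sm * A + (-a) • Sm := by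
    rw [hA, hSm]
    simp only [smul_mul_assoc, mul_sub, sub_mul, mul_add, add_mul, mul_smul_comm, smul_add,
      smul_smul, e20, e21, smul_sub]
    match_scalars <;> ((try ring); (try ring_nf); (try simp only [hI2, hI3]); (try ring))
  have hUp : U * Sp = Complex.exp a • (Sp * U) := exp_semiconj' A Sp a hp
  have hUm : U * Sm = Complex.exp (-a) • (Sm * U) := exp_semiconj' A Sm (-a) hm
  -- decompose ρ
  set p : ℂ := (Cρ : ℂ) * 2⁻¹ * Complex.exp (-(φ:ℂ) * Complex.I) with hpdef
  set q : ℂ := (Cρ : ℂ) * 2⁻¹ * Complex.exp ((φ:ℂ) * Complex.I) with hqdef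
  have hρ2 : ρ = p • Sp + q • Sm := by
    rw [hρ, hSp, hSm, hpdef, hqdef]
    have hcos : ((Real.cos φ : ℝ) : ℂ) = (Complex.exp ((φ:ℂ) * Complex.I) + Complex.exp (-(φ:ℂ) * Complex.I)) / 2 := by
      rw [Complex.ofReal_cos, Complex.cos]
    have hsin' : ((Real.sin φ : ℝ) : ℂ) = (Complex.exp ((φ:ℂ) * Complex.I) - Complex.exp (-(φ:ℂ) * Complex.I)) / (2 * Complex.I) := by
      rw [Complex.ofReal_sin, Complex.sin]
      field_simp
      ring_nf
      simp only [hI2, hI3]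
      try ring
    rw [hcos, hsin']
    match_scalars <;> ((try ring); (try field_simp); (try ring_nf); (try simp only [hI2, hI3]); (try ring))
  have hconj : U * ρ * V = (p * Complex.exp a) • Sp + (q * Complex.exp (-a)) • Sm := by
    have h1 : U * (p • Sp + q • Sm)
        = ((p * Complex.exp a) • Sp + (q * Complex.exp (-a)) • Sm) * U := by
      simp only [mul_add, add_mul, mul_smul_comm, smul_mul_assoc, hUp, hUm, smul_smul]
      try module
    rw [hρ2, h1, mul_assoc, hUV, mul_one]
  rw [hU, hV, hconj, hHf, hHop]
  -- now pure algebra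
  set P : ℂ := p * Complex.exp a with hP
  set Q : ℂ := q * Complex.exp (-a) with hQ
  have hcomm : (CH:ℂ) • S 0 * (P • Sp + Q • Sm) - (P • Sp + Q • Sm) * ((CH:ℂ) • S 0)
      = ((CH:ℂ) * (Q - P)) • S 2 := by
    rw [hSp, hSm]
    simp only [smul_mul_assoc, mul_add, add_mul, sub_mul, mul_sub, mul_smul_comm, smul_add,
      smul_sub, smul_smul, e01]
    match_scalars <;> ((try ring); (try ring_nf); (try simp only [hI2, hI3]); (try ring))
  rw [hcomm, smul_smul, smul_smul]
  have key : ∀ x : ℝ, Complex.exp ((x:ℂ) * Complex.I) - Complex.exp (-(x:ℂ) * Complex.I)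
      = 2 * Complex.I * ((Real.sin x : ℝ) : ℂ) := by
    intro x
    rw [Complex.ofReal_sin, Complex.sin]
    field_simp
    ring_nf
    simp only [hI2, hI3]
    try ring
  have h1 : Complex.exp ((φ:ℂ) * Complex.I) * Complex.exp (-a)
      = Complex.exp (((θ + φ : ℝ) : ℂ) * Complex.I) := by
    rw [← Complex.exp_add]; congr 1; rw [ha]; push_cast; ring
  have h2 : Complex.exp (-(φ:ℂ) * Complex.I) * Complex.exp a
      = Complex.exp (-((θ + φ : ℝ) : ℂ) * Complex.I) := by
    rw [← Complex.exp_add]; congr 1; rw [ha]; push_cast; ring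
  have hQP : Q - P = Complex.I * (Cρ : ℂ) * ((Real.sin (θ + φ) : ℝ) : ℂ) := by
    rw [hQ, hP, hpdef, hqdef]
    have expand : ((Cρ:ℂ) * 2⁻¹ * Complex.exp ((φ:ℂ) * Complex.I)) * Complex.exp (-a)
        - ((Cρ:ℂ) * 2⁻¹ * Complex.exp (-(φ:ℂ) * Complex.I)) * Complex.exp a
        = (Cρ:ℂ) * 2⁻¹ * (Complex.exp (((θ + φ : ℝ) : ℂ) * Complex.I)
            - Complex.exp (-((θ + φ : ℝ) : ℂ) * Complex.I)) := by
      rw [← h1, ← h2]; ring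
    rw [expand, key (θ + φ)]; ring
  congr 1
  rw [hQP]
  push_cast
  field_simp
  ring_nf
  simp only [hI2, hI3]
  try ring
end

section
/- Let S₁, S₂, S₃ satisfy [S_α, S_β] = i ∑_γ ε_{αβγ} S_γ, pairwise Hilbert–Schmidt orthogonal with common normalized Frobenius norm c. With H_c^f = C_H S₁, ρ_c^i = C_ρ(S₁ cos φ + S₂ sin φ), C_H, C_ρ > 0, and H = S₃/c, the extracted work W(T) := −Tr(H_c^f e^{−iωT H} ρ_c^i e^{iωT H}) + Tr(H_c^f ρ_c^i) equals −D‖H_c^f‖‖ρ_c^i‖ cos(ωT/c + φ) + Tr(H_c^f ρ_c^i), where D is the Hilbert space dimension and ‖·‖ the normalized Frobenius norm. -/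
open Matrix

section Aux

attribute [local instance] Matrix.linftyOpNormedRing Matrix.linftyOpNormedAlgebra

open NormedSpace in
/-- If `A * P = P * A + μ • P` then `exp A * P = e^μ • (P * exp A)`. -/
lemma exp_conj_shift {n : ℕ} (A P : Matrix (Fin n) (Fin n) ℂ) (μ : ℂ)
    (h : A * P = P * A + μ • P) :
    NormedSpace.exp A * P = Complex.exp μ • (P * NormedSpace.exp A) := by
  have hB : A * P = P * (A + μ • 1) := by rw [h]; noncomm_ring
  have hpow : ∀ k : ℕ, A ^ k * P = P * (A + μ • 1) ^ k := by
    intro k; induction k with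
    | zero => simp
    | succ k ih => rw [pow_succ', mul_assoc, ih, ← mul_assoc, hB, mul_assoc, ← pow_succ']
  have h1 : exp A * P = P * exp (A + μ • 1) := by
    simp only [exp_eq_tsum ℂ]
    erw [← (expSeries_summable' (𝕂 := ℂ) A).tsum_mul_right,
        ← (expSeries_summable' (𝕂 := ℂ) (A + μ • 1)).tsum_mul_left]
    congr 1; funext k
    rw [smul_mul_assoc, hpow, mul_smul_comm]
  rw [h1, Matrix.exp_add_of_commute _ _ (Commute.smul_right (Commute.one_right A) μ)]
  have h2 : exp ((μ • 1 : Matrix (Fin n) (Fin n) ℂ)) = Complex.exp μ • 1 := by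
    have h3 : (μ • 1 : Matrix (Fin n) (Fin n) ℂ) = Matrix.diagonal (fun _ => μ) := by
      simp [Matrix.smul_one_eq_diagonal]
    rw [h3, Matrix.exp_diagonal]
    simp [Matrix.smul_one_eq_diagonal, Pi.exp_def, ← Complex.exp_eq_exp_ℂ]
  rw [h2]
  simp [mul_smul_comm, mul_comm]

lemma exp_mul_exp_neg {n : ℕ} (A : Matrix (Fin n) (Fin n) ℂ) :
    NormedSpace.exp A * NormedSpace.exp (-A) = 1 := by
  rw [← Matrix.exp_add_of_commute _ _ (Commute.neg_right (Commute.refl A))]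
  simp

lemma trace_re_nonneg {D : ℕ} (M : Matrix (Fin D) (Fin D) ℂ) :
    0 ≤ ((Mᴴ * M).trace).re := by
  simp only [Matrix.trace, Matrix.diag, Matrix.mul_apply, Matrix.conjTranspose_apply,
    Complex.re_sum]
  refine Finset.sum_nonneg fun i _ => Finset.sum_nonneg fun j _ => ?_
  rw [Complex.star_def, ← Complex.normSq_eq_conj_mul_self]
  exact Complex.normSq_nonneg _

end Aux

/-- Closed-form cosine dependence of the extracted work under su(2) control:
`W(T) = -Tr(H_c^f e^{-iωTH} ρ_c^i e^{iωTH}) + Tr(H_c^f ρ_c^i)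
      = -D‖H_c^f‖‖ρ_c^i‖ cos(ωT/c + φ) + Tr(H_c^f ρ_c^i)`. -/
theorem stmt_10 (D : ℕ) (hD : 0 < D) (S : Fin 3 → Matrix (Fin D) (Fin D) ℂ)
    (hH : ∀ α, (S α).IsHermitian)
    (hc01 : S 0 * S 1 - S 1 * S 0 = Complex.I • S 2)
    (hc12 : S 1 * S 2 - S 2 * S 1 = Complex.I • S 0)
    (hc20 : S 2 * S 0 - S 0 * S 2 = Complex.I • S 1)
    (horth : ∀ α β, α ≠ β → (S α * S β).trace = 0)
    (c : ℝ) (hc : 0 < c) (hnorm : ∀ α, nfrob (S α) = c)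
    (CH Cρ ω T φ : ℝ) (hCH : 0 < CH) (hCρ : 0 < Cρ) (hω : 0 < ω)
    (hφ : φ ∈ Set.Icc 0 Real.pi)
    (Hf ρ Hop : Matrix (Fin D) (Fin D) ℂ)
    (hHf : Hf = (CH : ℂ) • S 0)
    (hρ : ρ = (Cρ : ℂ) • (((Real.cos φ : ℝ) : ℂ) • S 0 + ((Real.sin φ : ℝ) : ℂ) • S 1))
    (hHop : Hop = ((c⁻¹ : ℝ) : ℂ) • S 2) :
    -((Hf * (evol Hop (ω * T) * ρ * evol Hop (-(ω * T)))).trace).re +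
        ((Hf * ρ).trace).re
      = -(D : ℝ) * nfrob Hf * nfrob ρ * Real.cos (ω * T / c + φ) +
          ((Hf * ρ).trace).re := by
  have hDne : (D : ℝ) ≠ 0 := Nat.cast_ne_zero.mpr hD.ne'
  have hcne : c ≠ 0 := hc.ne'
  -- trace normalization facts
  have hgen : ∀ α, (((S α)ᴴ * S α).trace).re = (D : ℝ) * c ^ 2 := by
    intro α
    have h1 := hnorm α
    unfold nfrob at h1
    have hnn : 0 ≤ (((S α)ᴴ * S α).trace).re / D :=
      div_nonneg (trace_re_nonneg _) (Nat.cast_nonneg _)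
    have h2 : (((S α)ᴴ * S α).trace).re / D = c ^ 2 := by
      rw [← h1]; exact (Real.sq_sqrt hnn).symm
    field_simp at h2
    linarith
  have hS00 : ((S 0 * S 0).trace).re = (D : ℝ) * c ^ 2 := by
    have h := hgen 0; rwa [hH 0] at h
  have hS11 : ((S 1 * S 1).trace).re = (D : ℝ) * c ^ 2 := by
    have h := hgen 1; rwa [hH 1] at h
  have hS01 : (S 0 * S 1).trace = 0 := horth 0 1 (by decide)
  have hS10 : (S 1 * S 0).trace = 0 := horth 1 0 (by decide)
  -- norms of Hf and ρ
  have hnHf : nfrob Hf = CH * c := by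
    rw [hHf]
    unfold nfrob
    rw [Matrix.conjTranspose_smul, Matrix.smul_mul, Matrix.mul_smul, smul_smul,
      Matrix.trace_smul]
    have hstar : star ((CH : ℝ) : ℂ) * ((CH : ℝ) : ℂ) = ((CH ^ 2 : ℝ) : ℂ) := by
      rw [Complex.star_def, Complex.conj_ofReal]; push_cast; ring
    rw [hstar, smul_eq_mul, Complex.re_ofReal_mul, hgen 0]
    rw [show CH ^ 2 * ((D : ℝ) * c ^ 2) / D = (CH * c) ^ 2 by field_simp]
    exact Real.sqrt_sq (by positivity)
  have htrρ : (ρᴴ * ρ).trace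
      = ((Cρ ^ 2 * Real.cos φ ^ 2 : ℝ) : ℂ) * (S 0 * S 0).trace
        + ((Cρ ^ 2 * Real.sin φ ^ 2 : ℝ) : ℂ) * (S 1 * S 1).trace := by
    rw [hρ, Matrix.conjTranspose_smul, Matrix.conjTranspose_add, Matrix.conjTranspose_smul,
      Matrix.conjTranspose_smul, hH 0, hH 1]
    simp only [Matrix.smul_mul, Matrix.mul_smul, Matrix.add_mul, Matrix.mul_add, smul_smul,
      Matrix.trace_add, Matrix.trace_smul, hS01, hS10, smul_zero, add_zero, zero_add,
      smul_eq_mul, Complex.star_def, Complex.conj_ofReal, mul_zero]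
    push_cast
    ring
  have hnρ : nfrob ρ = Cρ * c := by
    unfold nfrob
    rw [htrρ, Complex.add_re, Complex.re_ofReal_mul, Complex.re_ofReal_mul, hS00, hS11]
    rw [show (Cρ ^ 2 * Real.cos φ ^ 2 * ((D : ℝ) * c ^ 2)
        + Cρ ^ 2 * Real.sin φ ^ 2 * ((D : ℝ) * c ^ 2)) / D = (Cρ * c) ^ 2 by
      field_simp
      linear_combination Real.sin_sq_add_cos_sq φ]
    exact Real.sqrt_sq (by positivity)
  -- set up the exponential conjugation
  set z : ℂ := (((-(ω * T) : ℝ) : ℂ) * Complex.I) * ((c⁻¹ : ℝ) : ℂ) with hz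
  set M : Matrix (Fin D) (Fin D) ℂ := z • S 2 with hM
  have hev1 : evol Hop (ω * T) = NormedSpace.exp M := by
    rw [evol, hHop, smul_smul]
  have hev2 : evol Hop (-(ω * T)) = NormedSpace.exp (-M) := by
    rw [evol, hHop, smul_smul]
    congr 1
    rw [hM, ← neg_smul]
    congr 1
    rw [hz]; push_cast; ring
  set P : Matrix (Fin D) (Fin D) ℂ := S 0 + Complex.I • S 1 with hP
  set Q : Matrix (Fin D) (Fin D) ℂ := S 0 - Complex.I • S 1 with hQ
  have e20 : S 2 * S 0 = S 0 * S 2 + Complex.I • S 1 := by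
    rw [← hc20]; noncomm_ring
  have e21 : S 2 * S 1 = S 1 * S 2 - Complex.I • S 0 := by
    rw [← hc12]; noncomm_ring
  have h2P : S 2 * P = P * S 2 + P := by
    rw [hP, Matrix.mul_add, Matrix.add_mul, Matrix.mul_smul, Matrix.smul_mul, e20, e21]
    match_scalars <;> simp [Complex.ext_iff]
  have h2Q : S 2 * Q = Q * S 2 + (-1 : ℂ) • Q := by
    rw [hQ, Matrix.mul_sub, Matrix.sub_mul, Matrix.mul_smul, Matrix.smul_mul, e20, e21]
    match_scalars <;> simp [Complex.ext_iff]
  have hMP : M * P = P * M + z • P := by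
    rw [hM, Matrix.smul_mul, h2P, Matrix.mul_smul, smul_add]
  have hMQ : M * Q = Q * M + (-z) • Q := by
    rw [hM, Matrix.smul_mul, h2Q, Matrix.mul_smul, smul_add, smul_smul]
    rw [neg_smul]
    congr 1
    rw [mul_neg_one, neg_smul]
  have hexpP := exp_conj_shift M P z hMP
  have hexpQ := exp_conj_shift M Q (-z) hMQ
  -- decompose ρ
  set a : ℂ := ((Cρ : ℝ) : ℂ) / 2 * (((Real.cos φ : ℝ) : ℂ) - ((Real.sin φ : ℝ) : ℂ) * Complex.I) with ha
  set b : ℂ := ((Cρ : ℝ) : ℂ) / 2 * (((Real.cos φ : ℝ) : ℂ) + ((Real.sin φ : ℝ) : ℂ) * Complex.I) with hb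
  have hρPQ : ρ = a • P + b • Q := by
    rw [hρ, hP, hQ, ha, hb]
    match_scalars <;> (simp [Complex.ext_iff]; try ring) <;> try exact ⟨trivial, trivial⟩
  -- the conjugated state
  set ψ : ℝ := ω * T / c + φ with hψ
  have hconj : NormedSpace.exp M * ρ * NormedSpace.exp (-M)
      = (Cρ : ℂ) • (((Real.cos ψ : ℝ) : ℂ) • S 0 + ((Real.sin ψ : ℝ) : ℂ) • S 1) := by
    rw [hρPQ, Matrix.mul_add, Matrix.mul_smul, Matrix.mul_smul, hexpP, hexpQ,
      smul_smul, smul_smul]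
    rw [Matrix.add_mul, Matrix.smul_mul, Matrix.smul_mul, Matrix.mul_assoc, Matrix.mul_assoc,
      exp_mul_exp_neg, Matrix.mul_one, Matrix.mul_one]
    have hzval : z = ((-(ω * T / c) : ℝ) : ℂ) * Complex.I := by
      rw [hz]; push_cast; field_simp; try ring
    have hez : Complex.exp z
        = ((Real.cos (ω * T / c) : ℝ) : ℂ) - ((Real.sin (ω * T / c) : ℝ) : ℂ) * Complex.I := by
      rw [hzval, Complex.exp_mul_I, ← Complex.ofReal_cos, ← Complex.ofReal_sin,
        Real.cos_neg, Real.sin_neg]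
      push_cast
      ring
    have henz : Complex.exp (-z)
        = ((Real.cos (ω * T / c) : ℝ) : ℂ) + ((Real.sin (ω * T / c) : ℝ) : ℂ) * Complex.I := by
      rw [hzval]
      rw [show -(((-(ω * T / c) : ℝ) : ℂ) * Complex.I) = ((ω * T / c : ℝ) : ℂ) * Complex.I by
        push_cast; ring]
      rw [Complex.exp_mul_I, ← Complex.ofReal_cos, ← Complex.ofReal_sin]
    rw [hez, henz, ha, hb, hP, hQ, hψ]
    rw [Real.cos_add, Real.sin_add]
    match_scalars <;> (simp [Complex.ext_iff]; try ring) <;> try exact ⟨trivial, trivial⟩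
  -- final computation
  rw [hev1, hev2, hconj, hnHf, hnρ, hHf]
  have hX : (((CH : ℂ) • S 0 *
      ((Cρ : ℂ) • (((Real.cos ψ : ℝ) : ℂ) • S 0 + ((Real.sin ψ : ℝ) : ℂ) • S 1))).trace).re
      = CH * (Cρ * (Real.cos ψ * ((D : ℝ) * c ^ 2))) := by
    rw [Matrix.smul_mul, Matrix.mul_smul, smul_smul, Matrix.mul_add, Matrix.mul_smul,
      Matrix.mul_smul, Matrix.trace_smul, Matrix.trace_add, Matrix.trace_smul,
      Matrix.trace_smul, hS01, smul_zero, add_zero]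
    rw [smul_smul, smul_eq_mul]
    rw [show ((CH : ℂ) * (Cρ : ℂ)) * (((Real.cos ψ : ℝ) : ℂ)) = ((CH * Cρ * Real.cos ψ : ℝ) : ℂ) by
      push_cast; ring]
    rw [Complex.re_ofReal_mul, hS00]
    ring
  rw [hX, hψ]
  ring
end

section
/- Let ρ = |ψ_i⟩⟨ψ_i| be a pure state on ℂ² and |ψ_t⟩ a unit vector with |⟨ψ_t|ψ_i⟩| < 1. Then the minimum time T* such that some traceless Hermitian H with normalized Frobenius norm ‖H‖ = 1 achieves ⟨ψ_t| e^{−iωT*H} ρ e^{iωT*H} |ψ_t⟩ = 1 equals T* = ω^{−1} arccos|⟨ψ_t|ψ_i⟩|. -/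
open Matrix

attribute [local instance] Matrix.linftyOpNormedRing Matrix.linftyOpNormedAlgebra

namespace Stmt18Aux

lemma vecMulVec_mulVec' {n : ℕ} (x y z : Fin n → ℂ) :
    vecMulVec x y *ᵥ z = (y ⬝ᵥ z) • x := by
  ext i
  simp [Matrix.mulVec, Matrix.vecMulVec_apply, dotProduct, Finset.sum_mul,
    Finset.mul_sum, mul_comm, mul_assoc, mul_left_comm]

lemma vecMulVec_conjTranspose {n : ℕ} (x y : Fin n → ℂ) :
    (vecMulVec x (star y))ᴴ = vecMulVec y (star x) := by
  ext i j
  simp [Matrix.vecMulVec_apply, Matrix.conjTranspose_apply, mul_comm]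

lemma trace_vecMulVec' {n : ℕ} (x y : Fin n → ℂ) :
    (vecMulVec x y).trace = y ⬝ᵥ x := by
  simp [Matrix.trace, Matrix.diag, Matrix.vecMulVec_apply, dotProduct, mul_comm]

lemma vecMulVec_mul_vecMulVec {n : ℕ} (x y z t : Fin n → ℂ) :
    vecMulVec x y * vecMulVec z t = (y ⬝ᵥ z) • vecMulVec x t := by
  ext i j
  simp [Matrix.mul_apply, Matrix.vecMulVec_apply, dotProduct, Finset.sum_mul,
    Finset.mul_sum, mul_comm, mul_assoc, mul_left_comm]

lemma conj_dot {n : ℕ} (A : Matrix (Fin n) (Fin n) ℂ) (x y : Fin n → ℂ) :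
    star x ⬝ᵥ (Aᴴ *ᵥ y) = star (star y ⬝ᵥ (A *ᵥ x)) := by
  rw [Matrix.star_dotProduct, Matrix.star_mulVec, Matrix.conjTranspose_conjTranspose,
    ← Matrix.dotProduct_mulVec]

lemma sq_eq_one_of (H : Matrix (Fin 2) (Fin 2) ℂ) (hH : H.IsHermitian)
    (htr : H.trace = 0) (hnf : nfrob H = 1) : H * H = 1 := by
  have hb : H 1 0 = (starRingEnd ℂ) (H 0 1) := by
    have := congrFun (congrFun hH.symm 1) 0
    simpa [Matrix.conjTranspose_apply] using this
  have ha : (starRingEnd ℂ) (H 0 0) = H 0 0 := by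
    have := congrFun (congrFun hH 0) 0
    simpa [Matrix.conjTranspose_apply] using this
  have h11 : H 1 1 = - H 0 0 := by
    rw [Matrix.trace_fin_two] at htr
    linear_combination htr
  have htr2 : ((H * H).trace).re = 2 := by
    have h1 : Real.sqrt (((Hᴴ * H).trace).re / 2) = 1 := by
      simpa [nfrob] using hnf
    rw [Real.sqrt_eq_one] at h1
    rw [hH.eq] at h1
    linarith
  have key : H 0 0 * H 0 0 + H 0 1 * H 1 0 = 1 := by
    rw [Matrix.trace_fin_two] at htr2
    simp only [Matrix.mul_apply, Fin.sum_univ_two] at htr2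
    rw [hb, h11] at htr2
    rw [hb]
    have him : (H 0 0).im = 0 := by
      have := congrArg Complex.im ha
      simp at this
      linarith
    apply Complex.ext
    · simp only [Complex.add_re, Complex.add_im, Complex.mul_re, Complex.mul_im, Complex.neg_re,
        Complex.neg_im, Complex.ofReal_re, Complex.one_re, Complex.conj_re, Complex.conj_im,
        him] at htr2 ⊢
      linarith
    · simp only [Complex.add_im, Complex.mul_im, Complex.one_im, him, Complex.conj_re,
        Complex.conj_im]
      ring
  have e00 : (H * H) 0 0 = 1 := by
    rw [Matrix.mul_apply, Fin.sum_univ_two]; exact key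
  have e01 : (H * H) 0 1 = 0 := by
    rw [Matrix.mul_apply, Fin.sum_univ_two, h11]; ring
  have e10 : (H * H) 1 0 = 0 := by
    rw [Matrix.mul_apply, Fin.sum_univ_two, h11]; ring
  have e11 : (H * H) 1 1 = 1 := by
    rw [Matrix.mul_apply, Fin.sum_univ_two, hb, h11]
    rw [hb] at key
    linear_combination key
  ext i j
  fin_cases i <;> fin_cases j <;>
    simp [Fin.zero_eta, Fin.mk_one, e00, e01, e10, e11, Matrix.one_apply]

lemma star_dot_self_eq_zero {n : ℕ} {v : Fin n → ℂ} (h : star v ⬝ᵥ v = 0) : v = 0 := by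
  have h1 : ∑ j, Complex.normSq (v j) = 0 := by
    have h2 := congrArg Complex.re h
    rw [dotProduct] at h2
    simp only [Pi.star_apply] at h2
    have h3 : ∀ j : Fin n, star (v j) * v j = ((Complex.normSq (v j) : ℝ) : ℂ) := by
      intro j; rw [mul_comm]; exact Complex.mul_conj _
    rw [Finset.sum_congr rfl (fun j _ => h3 j)] at h2
    rw [← Complex.ofReal_sum] at h2
    simpa using h2
  funext i
  have h4 := (Finset.sum_eq_zero_iff_of_nonneg
    (fun j _ => Complex.normSq_nonneg (v j))).mp h1 i (Finset.mem_univ i)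
  simpa using Complex.normSq_eq_zero.mp h4

lemma exp_of_sq (H : Matrix (Fin 2) (Fin 2) ℂ) (hH : H * H = 1) (θ : ℝ) :
    NormedSpace.exp (((θ : ℂ) * Complex.I) • H) =
      (Real.cos θ : ℂ) • 1 + ((Real.sin θ : ℂ) * Complex.I) • H := by
  set J : Matrix (Fin 2) (Fin 2) ℂ := Complex.I • H with hJdef
  have hJ : J * J = -1 := by
    rw [hJdef, Matrix.smul_mul, Matrix.mul_smul, smul_smul, hH, Complex.I_mul_I]
    simp
  let φ : ℂ →+* Matrix (Fin 2) (Fin 2) ℂ :=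
  { toFun := fun z => z.re • (1 : Matrix (Fin 2) (Fin 2) ℂ) + z.im • J
    map_one' := by simp
    map_mul' := by
      intro z w
      simp only [Complex.mul_re, Complex.mul_im, Matrix.add_mul, Matrix.mul_add,
        Matrix.smul_mul, Matrix.mul_smul, one_mul, mul_one, hJ]
      module
    map_zero' := by simp
    map_add' := by
      intro z w
      simp only [Complex.add_re, Complex.add_im]
      module }
  have hφcont : Continuous φ := by
    show Continuous fun z : ℂ => z.re • (1 : Matrix (Fin 2) (Fin 2) ℂ) + z.im • J
    exact (Complex.continuous_re.smul continuous_const).add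
      (Complex.continuous_im.smul continuous_const)
  have key := NormedSpace.map_exp φ hφcont ((θ : ℂ) * Complex.I)
  have h1 : NormedSpace.exp ((θ : ℂ) * Complex.I)
      = (Real.cos θ : ℂ) + (Real.sin θ : ℂ) * Complex.I := by
    rw [← Complex.exp_eq_exp_ℂ, Complex.exp_mul_I,
      Complex.ofReal_cos, Complex.ofReal_sin]
  have e1 : ((θ : ℂ) * Complex.I) • H = (θ : ℝ) • J := by
    rw [hJdef, ← algebraMap_smul ℂ θ (Complex.I • H), smul_smul]
    norm_num
  have e2 : φ ((θ : ℂ) * Complex.I) = (θ : ℝ) • J := by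
    show ((θ : ℂ) * Complex.I).re • (1 : Matrix (Fin 2) (Fin 2) ℂ)
        + ((θ : ℂ) * Complex.I).im • J = _
    simp
  have e3 : φ ((Real.cos θ : ℂ) + (Real.sin θ : ℂ) * Complex.I)
      = (Real.cos θ : ℝ) • (1 : Matrix (Fin 2) (Fin 2) ℂ) + (Real.sin θ : ℝ) • J := by
    show _ • (1 : Matrix (Fin 2) (Fin 2) ℂ) + _ • J = _
    simp [Complex.add_re, Complex.add_im, Complex.ofReal_re, Complex.ofReal_im,
      Complex.mul_I_re, Complex.mul_I_im, Complex.cos_ofReal_re, Complex.sin_ofReal_re]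
  rw [h1, e2, e3] at key
  rw [e1, ← (by exact key : Real.cos θ • (1 : Matrix (Fin 2) (Fin 2) ℂ) + Real.sin θ • J
    = NormedSpace.exp (θ • J))]
  have c1 : ((Real.cos θ : ℂ)) • (1 : Matrix (Fin 2) (Fin 2) ℂ) = Real.cos θ • 1 := by
    rw [← Complex.coe_algebraMap, algebraMap_smul]
  have c2 : ((Real.sin θ : ℂ) * Complex.I) • H = Real.sin θ • J := by
    rw [hJdef, ← algebraMap_smul ℂ (Real.sin θ) (Complex.I • H), smul_smul]
    norm_num
  rw [c1, c2]

lemma evol_eq (H : Matrix (Fin 2) (Fin 2) ℂ) (hH : H * H = 1) (t : ℝ) :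
    evol H t = (Real.cos t : ℂ) • 1 - ((Real.sin t : ℂ) * Complex.I) • H := by
  unfold evol
  rw [exp_of_sq H hH (-t)]
  rw [Real.cos_neg, Real.sin_neg, sub_eq_add_neg]
  push_cast
  rw [neg_mul, neg_smul]

lemma evol_neg (H : Matrix (Fin 2) (Fin 2) ℂ) (hherm : H.IsHermitian) (hH : H * H = 1)
    (t : ℝ) : evol H (-t) = (evol H t)ᴴ := by
  rw [evol_eq H hH, evol_eq H hH, Real.cos_neg, Real.sin_neg]
  rw [Matrix.conjTranspose_sub, Matrix.conjTranspose_smul, Matrix.conjTranspose_smul,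
    Matrix.conjTranspose_one, hherm.eq]
  rw [sub_eq_add_neg, sub_eq_add_neg, Complex.ofReal_neg, neg_mul, neg_smul, neg_neg]
  congr 2
  · exact (Complex.conj_ofReal _).symm
  · rw [show star ((Real.sin t : ℂ) * Complex.I) = -((Real.sin t : ℂ) * Complex.I) by
      simp only [star_mul', Complex.star_def, Complex.conj_I, Complex.conj_ofReal, mul_neg]]
    rw [neg_smul, neg_neg]

lemma evol_unitary (H : Matrix (Fin 2) (Fin 2) ℂ) (hherm : H.IsHermitian) (hH : H * H = 1)
    (t : ℝ) : (evol H t)ᴴ * evol H t = 1 := by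
  rw [← evol_neg H hherm hH, evol_eq H hH, evol_eq H hH]
  rw [Real.cos_neg, Real.sin_neg]
  have hI : ((Real.sin t : ℂ) * Complex.I) * ((Real.sin t : ℂ) * Complex.I)
      = -((Real.sin t : ℂ) * (Real.sin t : ℂ)) := by
    have := Complex.I_mul_I
    ring_nf
    rw [Complex.I_sq]
    ring
  have hcs : ((Real.cos t : ℂ)) * ((Real.cos t : ℂ)) + ((Real.sin t : ℂ)) * ((Real.sin t : ℂ)) = 1 := by
    norm_cast
    nlinarith [Real.sin_sq_add_cos_sq t]
  rw [Complex.ofReal_neg, neg_mul, neg_smul, sub_neg_eq_add]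
  simp only [Matrix.add_mul, Matrix.mul_sub, Matrix.smul_mul, Matrix.mul_smul, one_mul,
    mul_one, smul_smul, hH, hI]
  rw [show (1 : Matrix (Fin 2) (Fin 2) ℂ) = ((1:ℂ)) • (1 : Matrix (Fin 2) (Fin 2) ℂ) by simp]
  match_scalars
  · linear_combination Complex.sin_sq_add_cos_sq ((t:ℂ)) + (-(Complex.sin ((t:ℂ)))^2) * Complex.I_sq
  · ring

end Stmt18Aux

open Stmt18Aux in
/-- Minimum time to drive a two-level pure state to a target pure state under
bounded traceless control: `T* = ω⁻¹ arccos|⟨ψ_t|ψ_i⟩|`. -/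
theorem stmt_18 (ψi ψt : Fin 2 → ℂ)
    (hψi : star ψi ⬝ᵥ ψi = 1) (hψt : star ψt ⬝ᵥ ψt = 1)
    (hover : ‖star ψt ⬝ᵥ ψi‖ < 1)
    (ω : ℝ) (hω : 0 < ω) :
    IsLeast {T : ℝ | 0 ≤ T ∧ ∃ H : Matrix (Fin 2) (Fin 2) ℂ, H.IsHermitian ∧
        H.trace = 0 ∧ nfrob H = 1 ∧
        star ψt ⬝ᵥ (evol H (ω * T) * Matrix.vecMulVec ψi (star ψi) *
          evol H (-(ω * T))) *ᵥ ψt = 1}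
      (ω⁻¹ * Real.arccos ‖star ψt ⬝ᵥ ψi‖) := by
  set c : ℂ := star ψt ⬝ᵥ ψi with hc
  set R : ℝ := ‖c‖ with hRdef
  set α : ℝ := Real.arccos R with hαdef
  have hR0 : 0 ≤ R := norm_nonneg c
  have hR1 : R < 1 := hover
  have hcos : Real.cos α = R := Real.cos_arccos (by linarith) hR1.le
  have hα0 : 0 ≤ α := Real.arccos_nonneg R
  have hαhalf : α ≤ Real.pi / 2 := Real.arccos_le_pi_div_two.mpr hR0
  have hαpos : 0 < α := Real.arccos_pos.mpr hR1
  have hsin : 0 < Real.sin α :=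
    Real.sin_pos_of_pos_of_lt_pi hαpos (by linarith [Real.pi_pos])
  have hsin2 : Real.sin α ^ 2 = 1 - R ^ 2 := by
    have := Real.sin_sq_add_cos_sq α
    rw [hcos] at this
    linarith
  constructor
  · -- membership
    refine ⟨mul_nonneg (inv_nonneg.mpr hω.le) hα0, ?_⟩
    obtain ⟨p, hpdef⟩ : ∃ p : ℂ, p = Complex.exp ((c.arg : ℂ) * Complex.I) := ⟨_, rfl⟩
    have hpc : (R : ℂ) * p = c := by rw [hpdef]; exact Complex.norm_mul_exp_arg_mul_I c
    have hpabs : ‖p‖ = 1 := by rw [hpdef]; exact Complex.norm_exp_ofReal_mul_I _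
    have hpnorm : star p * p = 1 := by
      have h2' : p * (starRingEnd ℂ) p = ((Complex.normSq p : ℝ) : ℂ) := Complex.mul_conj p
      have h3' : Complex.normSq p = 1 := by
        rw [← Complex.sq_norm, hpabs]; norm_num
      calc star p * p = p * (starRingEnd ℂ) p := by rw [mul_comm]; rfl
        _ = ((Complex.normSq p : ℝ) : ℂ) := h2'
        _ = 1 := by rw [h3']; norm_num
    obtain ⟨w, hwdef⟩ : ∃ w : Fin 2 → ℂ, w = p • ψt := ⟨_, rfl⟩
    have hww : star w ⬝ᵥ w = 1 := by
      rw [hwdef, star_smul, smul_dotProduct, dotProduct_smul, hψt, smul_eq_mul,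
        smul_eq_mul, mul_one, hpnorm]
    have hwi : star w ⬝ᵥ ψi = (R : ℂ) := by
      rw [hwdef, star_smul, smul_dotProduct, ← hc, smul_eq_mul, ← hpc]
      linear_combination (R : ℂ) * hpnorm
    have hiw : star ψi ⬝ᵥ w = (R : ℂ) := by
      rw [Matrix.star_dotProduct, hwi]
      exact Complex.conj_ofReal R
    have hsC : ((Real.sin α : ℂ)) ≠ 0 := Complex.ofReal_ne_zero.mpr (ne_of_gt hsin)
    obtain ⟨v, hvdef⟩ : ∃ v : Fin 2 → ℂ,
        v = ((Real.sin α : ℂ))⁻¹ • (w - (R : ℂ) • ψi) := ⟨_, rfl⟩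
    have hiv : star ψi ⬝ᵥ v = 0 := by
      rw [hvdef, dotProduct_smul, dotProduct_sub, dotProduct_smul, hiw,
        hψi]
      simp
    have hvi : star v ⬝ᵥ ψi = 0 := by
      rw [Matrix.star_dotProduct, hiv, star_zero]
    have hvv : star v ⬝ᵥ v = 1 := by
      have hinner : star (w - (R : ℂ) • ψi) ⬝ᵥ (w - (R : ℂ) • ψi) = 1 - (R : ℂ) ^ 2 := by
        rw [star_sub, star_smul, sub_dotProduct, dotProduct_sub,
          dotProduct_sub, smul_dotProduct, smul_dotProduct,
          dotProduct_smul, dotProduct_smul, hww, hwi, hiw, hψi]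
        simp only [smul_eq_mul, mul_one, Complex.star_def, Complex.conj_ofReal]
        ring
      rw [hvdef, star_smul, smul_dotProduct, dotProduct_smul, hinner,
        smul_eq_mul, smul_eq_mul]
      have hconj : star (((Real.sin α : ℂ))⁻¹) = ((Real.sin α : ℂ))⁻¹ := by
        show (starRingEnd ℂ) _ = _
        rw [map_inv₀, Complex.conj_ofReal]
      rw [hconj]
      have hcast : ((Real.sin α : ℂ)) ^ 2 = 1 - (R : ℂ) ^ 2 := by
        exact_mod_cast congrArg (fun x : ℝ => (x : ℂ)) hsin2
      rw [← hcast, pow_two,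
        show ((Real.sin α : ℂ))⁻¹ * (((Real.sin α : ℂ))⁻¹ * ((Real.sin α : ℂ) * (Real.sin α : ℂ)))
          = (((Real.sin α : ℂ))⁻¹ * (Real.sin α : ℂ)) * (((Real.sin α : ℂ))⁻¹ * (Real.sin α : ℂ))
          from by ring, inv_mul_cancel₀ hsC, one_mul]
    obtain ⟨H, hHdef⟩ : ∃ H : Matrix (Fin 2) (Fin 2) ℂ,
        H = Complex.I • (vecMulVec v (star ψi) - vecMulVec ψi (star v)) := ⟨_, rfl⟩
    have hherm : H.IsHermitian := by
      show Hᴴ = H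
      rw [hHdef, Matrix.conjTranspose_smul, Matrix.conjTranspose_sub,
        vecMulVec_conjTranspose, vecMulVec_conjTranspose]
      rw [show star Complex.I = -Complex.I by simp]
      module
    have htrace : H.trace = 0 := by
      rw [hHdef, Matrix.trace_smul, Matrix.trace_sub, trace_vecMulVec', trace_vecMulVec',
        hiv, hvi]
      simp
    have hKK : vecMulVec ψi (star ψi) + vecMulVec v (star v) = 1 := by
      obtain ⟨K, hKdef⟩ : ∃ K : Matrix (Fin 2) (Fin 2) ℂ,
          K = Matrix.of ![star ψi, star v] := ⟨_, rfl⟩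
      have e1 := hψi
      have e2 := hiv
      have e3 := hvi
      have e4 := hvv
      simp only [dotProduct, Fin.sum_univ_two, Pi.star_apply] at e1 e2 e3 e4
      have h1 : K * Kᴴ = 1 := by
        ext i j
        fin_cases i <;> fin_cases j
        · show (K * Kᴴ) 0 0 = (1 : Matrix (Fin 2) (Fin 2) ℂ) 0 0
          rw [Matrix.mul_apply, Fin.sum_univ_two, Matrix.conjTranspose_apply,
            Matrix.conjTranspose_apply, Matrix.one_apply_eq, hKdef]
          simp only [Matrix.of_apply, Matrix.cons_val_zero, Matrix.cons_val_one,
            Matrix.head_cons, Pi.star_apply, star_star]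
          exact e1
        · show (K * Kᴴ) 0 1 = (1 : Matrix (Fin 2) (Fin 2) ℂ) 0 1
          rw [Matrix.mul_apply, Fin.sum_univ_two, Matrix.conjTranspose_apply,
            Matrix.conjTranspose_apply, Matrix.one_apply_ne (by decide), hKdef]
          simp only [Matrix.of_apply, Matrix.cons_val_zero, Matrix.cons_val_one,
            Matrix.head_cons, Pi.star_apply, star_star]
          exact e2
        · show (K * Kᴴ) 1 0 = (1 : Matrix (Fin 2) (Fin 2) ℂ) 1 0
          rw [Matrix.mul_apply, Fin.sum_univ_two, Matrix.conjTranspose_apply,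
            Matrix.conjTranspose_apply, Matrix.one_apply_ne (by decide), hKdef]
          simp only [Matrix.of_apply, Matrix.cons_val_zero, Matrix.cons_val_one,
            Matrix.head_cons, Pi.star_apply, star_star]
          exact e3
        · show (K * Kᴴ) 1 1 = (1 : Matrix (Fin 2) (Fin 2) ℂ) 1 1
          rw [Matrix.mul_apply, Fin.sum_univ_two, Matrix.conjTranspose_apply,
            Matrix.conjTranspose_apply, Matrix.one_apply_eq, hKdef]
          simp only [Matrix.of_apply, Matrix.cons_val_zero, Matrix.cons_val_one,
            Matrix.head_cons, Pi.star_apply, star_star]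
          exact e4
      have h2 : Kᴴ * K = 1 := mul_eq_one_comm.mp h1
      rw [← h2]
      ext i j
      rw [Matrix.add_apply, Matrix.vecMulVec_apply, Matrix.vecMulVec_apply, Matrix.mul_apply,
        Fin.sum_univ_two, Matrix.conjTranspose_apply, Matrix.conjTranspose_apply, hKdef]
      simp only [Matrix.of_apply, Matrix.cons_val_zero, Matrix.cons_val_one,
        Matrix.head_cons, Pi.star_apply, star_star]
    have hH2 : H * H = 1 := by
      rw [hHdef, Matrix.smul_mul, Matrix.mul_smul, smul_smul, Complex.I_mul_I]
      rw [Matrix.sub_mul, Matrix.mul_sub, Matrix.mul_sub, vecMulVec_mul_vecMulVec,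
        vecMulVec_mul_vecMulVec, vecMulVec_mul_vecMulVec, vecMulVec_mul_vecMulVec,
        hiv, hvi, hψi, hvv]
      rw [← hKK]
      module
    have hnf1 : nfrob H = 1 := by
      unfold nfrob
      rw [show Hᴴ = H from hherm, hH2]
      simp [Matrix.trace_one]
    refine ⟨H, hherm, htrace, hnf1, ?_⟩
    have hωT : ω * (ω⁻¹ * α) = α := by field_simp
    rw [hωT]
    have hE : evol H α = (Real.cos α : ℂ) • 1 - ((Real.sin α : ℂ) * Complex.I) • H :=
      evol_eq H hH2 α
    have hE' : evol H (-α) = (evol H α)ᴴ := evol_neg H hherm hH2 α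
    have hHv : H *ᵥ ψi = Complex.I • v := by
      rw [hHdef, Matrix.smul_mulVec, Matrix.sub_mulVec, vecMulVec_mulVec',
        vecMulVec_mulVec', hψi, hvi]
      simp
    have hEψ : evol H α *ᵥ ψi = w := by
      rw [hE, Matrix.sub_mulVec, Matrix.smul_mulVec, Matrix.smul_mulVec,
        Matrix.one_mulVec, hHv, smul_smul]
      rw [show ((Real.sin α : ℂ) * Complex.I) * Complex.I = -(Real.sin α : ℂ) by
        rw [mul_assoc, Complex.I_mul_I]; ring]
      rw [neg_smul, sub_neg_eq_add, hvdef, smul_smul, mul_inv_cancel₀ hsC, one_smul]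
      rw [congrArg (fun x : ℝ => (x : ℂ)) hcos]
      module
    rw [hE', ← Matrix.mulVec_mulVec, ← Matrix.mulVec_mulVec, vecMulVec_mulVec',
      Matrix.mulVec_smul, dotProduct_smul, conj_dot, hEψ]
    have hptw : star ψt ⬝ᵥ w = p := by
      rw [hwdef, dotProduct_smul, hψt, smul_eq_mul, mul_one]
    rw [hptw, smul_eq_mul, hpnorm]
  · -- lower bound
    rintro T ⟨hT0, H, hherm, htrace, hnfH, hcond⟩
    have hH2 : H * H = 1 := sq_eq_one_of H hherm htrace hnfH
    set θ : ℝ := ω * T with hθdef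
    have hθ0 : 0 ≤ θ := mul_nonneg hω.le hT0
    have hE' : evol H (-θ) = (evol H θ)ᴴ := evol_neg H hherm hH2 θ
    rw [hE'] at hcond
    obtain ⟨z, hzdef⟩ : ∃ z : ℂ, z = star ψt ⬝ᵥ (evol H θ *ᵥ ψi) := ⟨_, rfl⟩
    have hcond' : star z * z = 1 := by
      rw [← Matrix.mulVec_mulVec, ← Matrix.mulVec_mulVec, vecMulVec_mulVec',
        Matrix.mulVec_smul, dotProduct_smul, conj_dot, ← hzdef] at hcond
      simpa [smul_eq_mul] using hcond
    have hzz : z * star z = 1 := by rw [mul_comm]; exact hcond'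
    have hzabs : Complex.normSq z = 1 := by
      have h5 : ((Complex.normSq z : ℝ) : ℂ) = 1 := by
        rw [← Complex.mul_conj z]; exact hzz
      exact_mod_cast h5
    have hwnorm : star (evol H θ *ᵥ ψi) ⬝ᵥ (evol H θ *ᵥ ψi) = 1 := by
      rw [Matrix.star_mulVec, Matrix.dotProduct_mulVec, Matrix.vecMul_vecMul,
        evol_unitary H hherm hH2, Matrix.vecMul_one, hψi]
    have hw : evol H θ *ᵥ ψi = z • ψt := by
      have hd : star (evol H θ *ᵥ ψi - z • ψt) ⬝ᵥ (evol H θ *ᵥ ψi - z • ψt) = 0 := by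
        rw [star_sub, star_smul, sub_dotProduct, dotProduct_sub,
          dotProduct_sub, smul_dotProduct, smul_dotProduct,
          dotProduct_smul, dotProduct_smul, hwnorm, hψt]
        have h1 : star (evol H θ *ᵥ ψi) ⬝ᵥ ψt = star z := by
          rw [Matrix.star_dotProduct, ← hzdef]
        rw [h1, ← hzdef]
        simp only [smul_eq_mul]
        linear_combination -hzz
      exact sub_eq_zero.mp (star_dot_self_eq_zero hd)
    obtain ⟨h, hhdef⟩ : ∃ h : ℂ, h = star ψi ⬝ᵥ (H *ᵥ ψi) := ⟨_, rfl⟩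
    have hhreal : star h = h := by
      have h6 := conj_dot H ψi ψi
      rw [show Hᴴ = H from hherm] at h6
      rw [← hhdef] at h6
      exact h6.symm
    have him : h.im = 0 := by
      have h7 := congrArg Complex.im hhreal
      simp only [Complex.star_def, Complex.conj_im] at h7
      linarith
    have hiE : star ψi ⬝ᵥ (evol H θ *ᵥ ψi)
        = (Real.cos θ : ℂ) - (Real.sin θ : ℂ) * Complex.I * h := by
      rw [evol_eq H hH2, Matrix.sub_mulVec, Matrix.smul_mulVec,
        Matrix.smul_mulVec, Matrix.one_mulVec, dotProduct_sub,
        dotProduct_smul, dotProduct_smul, hψi, ← hhdef]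
      simp only [smul_eq_mul]
      ring
    have hiE2 : star ψi ⬝ᵥ (evol H θ *ᵥ ψi) = z * star c := by
      rw [hw, dotProduct_smul, smul_eq_mul]
      congr 1
      rw [Matrix.star_dotProduct, ← hc]
    have key : Real.cos θ ^ 2 + Real.sin θ ^ 2 * h.re ^ 2 = R ^ 2 := by
      have eR : Complex.normSq (z * star c) = R ^ 2 := by
        rw [Complex.normSq_mul, hzabs, one_mul, Complex.star_def, Complex.normSq_conj,
          ← Complex.sq_norm, hRdef]
      have e := congrArg Complex.normSq (hiE.symm.trans hiE2)
      rw [eR, Complex.normSq_apply] at e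
      simp only [Complex.sub_re, Complex.sub_im, Complex.mul_re, Complex.mul_im,
        Complex.I_re, Complex.I_im, Complex.ofReal_re, Complex.ofReal_im, him] at e
      linear_combination e
    have hcosθ : Real.cos θ ^ 2 ≤ R ^ 2 := by nlinarith [sq_nonneg (Real.sin θ * h.re)]
    have habs : |Real.cos θ| ≤ R := by
      nlinarith [sq_abs (Real.cos θ), abs_nonneg (Real.cos θ)]
    have hαθ : α ≤ θ := by
      rcases le_or_gt (Real.pi / 2) θ with hcase | hcase
      · linarith
      · have h1 : Real.cos θ ≤ R := le_trans (le_abs_self _) habs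
        have h2 : α ≤ Real.arccos (Real.cos θ) := by
          rw [hαdef, Real.arccos, Real.arccos]
          have := Real.monotone_arcsin h1
          linarith
        rw [Real.arccos_cos hθ0 (by linarith [Real.pi_pos])] at h2
        exact h2
    calc ω⁻¹ * α ≤ ω⁻¹ * θ := mul_le_mul_of_nonneg_left hαθ (inv_nonneg.mpr hω.le)
      _ = T := by rw [hθdef]; field_simp
end

section
/- Let ρ^i and H^f be Hermitian operators on a D-dimensional Hilbert space with spectral decompositions ρ^i = ∑_n q_n |q_n⟩⟨q_n| (q₁ ≥ … ≥ q_D) and H^f = ∑_n E_n |E_n⟩⟨E_n| (E₁ ≤ … ≤ E_D). Then for every unitary U, Tr(H^f U ρ^i U†) ≥ ∑_n q_n E_n, with equality attained by the unitary mapping |q_n⟩ to |E_n⟩. Equivalently, the ergotropy W_erg = Tr(H^f ρ^i) − ∑_n q_n E_n is the maximum of −Tr(H^f Uρ^i U†) + Tr(H^f ρ^i) over all unitaries U. -/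
open Matrix

lemma ergo_perm_sum_le {D : ℕ} {q E : Fin D → ℝ} (hq : Antitone q) (hE : Monotone E)
    (σ : Equiv.Perm (Fin D)) : ∑ n, q n * E n ≤ ∑ n, q (σ n) * E n := by
  have hanti : Antivary q E := fun i j hij =>
    hq (le_of_not_ge fun h => (hE h).not_gt hij)
  simpa using hanti.sum_smul_le_sum_comp_perm_smul (σ := σ)

lemma ergo_ds_ineq {D : ℕ} {q E : Fin D → ℝ} (hq : Antitone q) (hE : Monotone E)
    {M : Matrix (Fin D) (Fin D) ℝ} (hM : M ∈ doublyStochastic ℝ (Fin D)) :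
    ∑ n, q n * E n ≤ ∑ m, ∑ n, M m n * (q n * E m) := by
  classical
  have hlin : IsLinearMap ℝ
      (fun A : Matrix (Fin D) (Fin D) ℝ => ∑ m, ∑ n, A m n * (q n * E m)) := by
    constructor
    · intro A B
      simp [Matrix.add_apply, add_mul, Finset.sum_add_distrib]
    · intro c A
      simp [Matrix.smul_apply, Finset.mul_sum, mul_assoc, smul_eq_mul]
  have hconv : Convex ℝ {A : Matrix (Fin D) (Fin D) ℝ |
      ∑ n, q n * E n ≤ ∑ m, ∑ n, A m n * (q n * E m)} :=
    convex_halfSpace_ge hlin _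
  have hsub : {A : Matrix (Fin D) (Fin D) ℝ | ∃ σ : Equiv.Perm (Fin D), σ.permMatrix ℝ = A} ⊆
      {A : Matrix (Fin D) (Fin D) ℝ |
        ∑ n, q n * E n ≤ ∑ m, ∑ n, A m n * (q n * E m)} := by
    rintro _ ⟨σ, rfl⟩
    have hval : ∑ m, ∑ n, (σ.permMatrix ℝ) m n * (q n * E m) = ∑ m, q (σ m) * E m := by
      refine Finset.sum_congr rfl fun m _ => ?_
      simp [Equiv.Perm.permMatrix, PEquiv.toMatrix_apply, Equiv.toPEquiv_apply,
        ite_mul, Finset.sum_ite_eq]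
    rw [Set.mem_setOf_eq, hval]
    exact ergo_perm_sum_le hq hE σ
  have hM' : M ∈ (doublyStochastic ℝ (Fin D) : Set (Matrix (Fin D) (Fin D) ℝ)) := hM
  rw [doublyStochastic_eq_convexHull_permMatrix] at hM'
  exact convexHull_min hsub hconv hM'

/-- Ergotropy as the unconstrained maximum extractable work: for
`ρ^i = ∑ q_n |q_n⟩⟨q_n|` (`q` decreasing) and `H^f = ∑ E_n |E_n⟩⟨E_n|`
(`E` increasing), every unitary satisfies `Tr(H^f UρU†) ≥ ∑ q_n E_n`, equality
is attained, and the ergotropy `Tr(H^f ρ^i) - ∑ q_n E_n` is the maximum of the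
extracted work over all unitaries. -/
theorem stmt_19 (D : ℕ) (q E : Fin D → ℝ)
    (hq : Antitone q) (hq0 : ∀ n, 0 ≤ q n) (hq1 : ∑ n, q n = 1)
    (hE : Monotone E)
    (e f : Fin D → Fin D → ℂ)
    (he : ∀ i j, star (e i) ⬝ᵥ e j = if i = j then 1 else 0)
    (hf : ∀ i j, star (f i) ⬝ᵥ f j = if i = j then 1 else 0)
    (ρ Hf : Matrix (Fin D) (Fin D) ℂ)
    (hρ : ρ = ∑ n, (q n : ℂ) • Matrix.vecMulVec (e n) (star (e n)))
    (hHf : Hf = ∑ n, (E n : ℂ) • Matrix.vecMulVec (f n) (star (f n))) :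
    (∀ U ∈ Matrix.unitaryGroup (Fin D) ℂ,
        (∑ n, q n * E n) ≤ ((Hf * (U * ρ * Uᴴ)).trace).re) ∧
    (∃ U ∈ Matrix.unitaryGroup (Fin D) ℂ,
        ((Hf * (U * ρ * Uᴴ)).trace).re = ∑ n, q n * E n) ∧
    IsGreatest {w : ℝ | ∃ U ∈ Matrix.unitaryGroup (Fin D) ℂ,
        w = -((Hf * (U * ρ * Uᴴ)).trace).re + ((Hf * ρ).trace).re}
      (((Hf * ρ).trace).re - ∑ n, q n * E n) := by
  classical
  set Dq : Matrix (Fin D) (Fin D) ℂ := Matrix.diagonal (fun n => (q n : ℂ)) with hDq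
  set DE : Matrix (Fin D) (Fin D) ℂ := Matrix.diagonal (fun n => (E n : ℂ)) with hDE
  set Ve : Matrix (Fin D) (Fin D) ℂ := Matrix.of (fun i n => e n i) with hVedef
  set Vf : Matrix (Fin D) (Fin D) ℂ := Matrix.of (fun i n => f n i) with hVfdef
  have hVe1 : Veᴴ * Ve = 1 := by
    ext n m
    simpa [Matrix.mul_apply, Matrix.conjTranspose_apply, dotProduct, Matrix.one_apply,
      hVedef] using he n m
  have hVe2 : Ve * Veᴴ = 1 := mul_eq_one_comm.mp hVe1
  have hVf1 : Vfᴴ * Vf = 1 := by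
    ext n m
    simpa [Matrix.mul_apply, Matrix.conjTranspose_apply, dotProduct, Matrix.one_apply,
      hVfdef] using hf n m
  have hVf2 : Vf * Vfᴴ = 1 := mul_eq_one_comm.mp hVf1
  -- spectral forms
  have hρ' : ρ = Ve * Dq * Veᴴ := by
    rw [hρ]
    ext i j
    simp only [Matrix.sum_apply, Matrix.smul_apply, Matrix.vecMulVec_apply, smul_eq_mul,
      Matrix.mul_apply, Matrix.diagonal_apply, Matrix.conjTranspose_apply, hVedef, hDq,
      Matrix.of_apply, Pi.star_apply]
    refine Finset.sum_congr rfl fun n _ => ?_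
    simp only [mul_ite, mul_zero, ite_mul, zero_mul, Finset.sum_ite_eq',
      Finset.mem_univ, if_true]
    ring
  have hHf' : Hf = Vf * DE * Vfᴴ := by
    rw [hHf]
    ext i j
    simp only [Matrix.sum_apply, Matrix.smul_apply, Matrix.vecMulVec_apply, smul_eq_mul,
      Matrix.mul_apply, Matrix.diagonal_apply, Matrix.conjTranspose_apply, hVfdef, hDE,
      Matrix.of_apply, Pi.star_apply]
    refine Finset.sum_congr rfl fun n _ => ?_
    simp only [mul_ite, mul_zero, ite_mul, zero_mul, Finset.sum_ite_eq',
      Finset.mem_univ, if_true]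
    ring
  -- trace formula for a unitary W
  have trace_formula : ∀ W : Matrix (Fin D) (Fin D) ℂ,
      ((DE * W * Dq * Wᴴ).trace) =
        ((∑ m, ∑ n, E m * q n * Complex.normSq (W m n) : ℝ) : ℂ) := by
    intro W
    rw [Matrix.trace]
    push_cast
    refine Finset.sum_congr rfl fun m _ => ?_
    have h1 : (DE * W * Dq * Wᴴ) m m
        = ∑ n, (E m : ℂ) * W m n * (q n : ℂ) * (starRingEnd ℂ) (W m n) := by
      simp [Matrix.mul_apply, hDE, hDq, Matrix.diagonal_apply, Matrix.conjTranspose_apply,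
        Finset.sum_ite_eq, Finset.mul_sum, Matrix.mul_diagonal, Matrix.diagonal_mul,
        mul_assoc]
    rw [Matrix.diag_apply, h1]
    refine Finset.sum_congr rfl fun n _ => ?_
    rw [← Complex.mul_conj]
    ring
  -- main trace identity
  have trace_eq : ∀ U : Matrix (Fin D) (Fin D) ℂ,
      (Hf * (U * ρ * Uᴴ)).trace = (DE * (Vfᴴ * U * Ve) * Dq * (Vfᴴ * U * Ve)ᴴ).trace := by
    intro U
    rw [hρ', hHf']
    have h2 : Vf * DE * Vfᴴ * (U * (Ve * Dq * Veᴴ) * Uᴴ)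
        = Vf * (DE * (Vfᴴ * U * Ve) * Dq * (Veᴴ * Uᴴ)) := by
      simp only [Matrix.mul_assoc]
    rw [h2, Matrix.trace_mul_comm]
    congr 1
    simp only [Matrix.conjTranspose_mul, Matrix.conjTranspose_conjTranspose, Matrix.mul_assoc]
  -- unitary W facts
  have hWu : ∀ U ∈ Matrix.unitaryGroup (Fin D) ℂ,
      (Vfᴴ * U * Ve) * (Vfᴴ * U * Ve)ᴴ = 1 ∧ (Vfᴴ * U * Ve)ᴴ * (Vfᴴ * U * Ve) = 1 := by
    intro U hU
    have hU1 : U * Uᴴ = 1 := by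
      have := (Matrix.mem_unitaryGroup_iff).mp hU
      rwa [Matrix.star_eq_conjTranspose] at this
    have hU2 : Uᴴ * U = 1 := mul_eq_one_comm.mp hU1
    constructor
    · calc (Vfᴴ * U * Ve) * (Vfᴴ * U * Ve)ᴴ
          = Vfᴴ * (U * (Ve * Veᴴ) * Uᴴ) * Vf := by
            simp only [Matrix.conjTranspose_mul, Matrix.conjTranspose_conjTranspose,
              Matrix.mul_assoc]
      _ = 1 := by rw [hVe2, Matrix.mul_one, hU1, Matrix.mul_one, hVf1]
    · calc (Vfᴴ * U * Ve)ᴴ * (Vfᴴ * U * Ve)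
          = Veᴴ * (Uᴴ * (Vf * Vfᴴ) * U) * Ve := by
            simp only [Matrix.conjTranspose_mul, Matrix.conjTranspose_conjTranspose,
              Matrix.mul_assoc]
      _ = 1 := by rw [hVf2, Matrix.mul_one, hU2, Matrix.mul_one, hVe1]
  -- doubly stochastic matrix of |W m n|^2
  have hDS : ∀ W : Matrix (Fin D) (Fin D) ℂ, W * Wᴴ = 1 → Wᴴ * W = 1 →
      (Matrix.of fun m n => Complex.normSq (W m n)) ∈ doublyStochastic ℝ (Fin D) := by
    intro W hW1 hW2
    rw [mem_doublyStochastic_iff_sum]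
    refine ⟨fun i j => Complex.normSq_nonneg _, fun i => ?_, fun j => ?_⟩
    · have := congrArg (fun A => (A i i).re) hW1
      simpa [Matrix.mul_apply, Matrix.conjTranspose_apply, Matrix.one_apply,
        ← Complex.mul_conj', Complex.re_sum, Complex.normSq_apply] using this
    · have := congrArg (fun A => (A j j).re) hW2
      simpa [Matrix.mul_apply, Matrix.conjTranspose_apply, Matrix.one_apply,
        Complex.mul_conj, Complex.re_sum, Complex.normSq_apply] using this
  -- the inequality for every unitary
  have main_ineq : ∀ U ∈ Matrix.unitaryGroup (Fin D) ℂ,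
      (∑ n, q n * E n) ≤ ((Hf * (U * ρ * Uᴴ)).trace).re := by
    intro U hU
    obtain ⟨hW1, hW2⟩ := hWu U hU
    set W := Vfᴴ * U * Ve with hWdef
    have hre : ((Hf * (U * ρ * Uᴴ)).trace).re
        = ∑ m, ∑ n, E m * q n * Complex.normSq (W m n) := by
      rw [trace_eq U, trace_formula W, Complex.ofReal_re]
    rw [hre]
    have := ergo_ds_ineq hq hE (hDS W hW1 hW2)
    calc (∑ n, q n * E n)
        ≤ ∑ m, ∑ n, (Matrix.of fun m n => Complex.normSq (W m n)) m n * (q n * E m) := this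
      _ = ∑ m, ∑ n, E m * q n * Complex.normSq (W m n) := by
          refine Finset.sum_congr rfl fun m _ => Finset.sum_congr rfl fun n _ => ?_
          simp [Matrix.of_apply]; ring
  -- the optimal unitary
  have hU0mem : Vf * Veᴴ ∈ Matrix.unitaryGroup (Fin D) ℂ := by
    rw [Matrix.mem_unitaryGroup_iff, Matrix.star_eq_conjTranspose]
    calc (Vf * Veᴴ) * (Vf * Veᴴ)ᴴ = Vf * (Veᴴ * Ve) * Vfᴴ := by
          simp only [Matrix.conjTranspose_mul, Matrix.conjTranspose_conjTranspose,
            Matrix.mul_assoc]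
      _ = 1 := by rw [hVe1, Matrix.mul_one, hVf2]
  have hU0val : ((Hf * ((Vf * Veᴴ) * ρ * (Vf * Veᴴ)ᴴ)).trace).re = ∑ n, q n * E n := by
    have hWid : Vfᴴ * (Vf * Veᴴ) * Ve = 1 := by
      calc Vfᴴ * (Vf * Veᴴ) * Ve = (Vfᴴ * Vf) * (Veᴴ * Ve) := by
            simp only [Matrix.mul_assoc]
        _ = 1 := by rw [hVf1, hVe1, Matrix.mul_one]
    rw [trace_eq, hWid, trace_formula, Complex.ofReal_re]
    have : ∀ m n : Fin D, Complex.normSq ((1 : Matrix (Fin D) (Fin D) ℂ) m n)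
        = if m = n then 1 else 0 := by
      intro m n
      by_cases h : m = n <;> simp [Matrix.one_apply, h]
    simp only [this]
    rw [Finset.sum_comm]
    refine Finset.sum_congr rfl fun n _ => ?_
    simp [mul_ite, Finset.sum_ite_eq, mul_comm]
  refine ⟨main_ineq, ⟨Vf * Veᴴ, hU0mem, hU0val⟩, ?_, ?_⟩
  · exact ⟨Vf * Veᴴ, hU0mem, by rw [hU0val]; ring⟩
  · rintro w ⟨U, hU, rfl⟩
    have := main_ineq U hU
    linarith
end
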